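/- For $c > 0$ and $\kappa \neq 0$ with $k^2 = 3\kappa^2 + c$, $k > 0$, the Sasa-Satsuma oscillatory 1-soliton peak height is $\frac{1}{2}(k^2+\kappa^2)^{1/2}$; that is, at the point $\xi_0 > 0$ where $\cosh(2k\xi_0) = (k^2-\kappa^2)/(|\kappa|\sqrt{k^2+\kappa^2})$, the amplitude $|\tilde{f}_{SS}(\xi_0)|$ equals $\frac{1}{2}\sqrt{k^2+\kappa^2}$. -/

import Mathlib

set_option maxHeartbeats 1000000 in
open Complex in
theorem ss_peak_height_positive_speed
    (k κ c : ℝ) (hk : 0 < k) (hκ : κ ≠ 0)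
    (hc : c = k^2 - 3*κ^2) (hcpos : 0 < c)
    (lam : ℝ) (hlam : lam = Complex.arg ((κ : ℂ) * (κ + I * k)))
    (f : ℝ → ℂ)
    (hf : ∀ ξ, f ξ =
      ((k : ℂ) * (Real.sqrt (2 * |κ|) : ℝ) * (((k^2 + κ^2) ^ ((1:ℝ)/4) : ℝ) : ℂ)
          * Complex.exp (I * (κ*ξ)) * Complex.cosh (k*ξ + I * (lam/2)))
        / ((|κ| * Real.cosh (2*k*ξ) + Real.sqrt (k^2 + κ^2) : ℝ)))
    (ξ₀ : ℝ) (hξ₀ : 0 < ξ₀)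
    (hcrit : Real.cosh (2*k*ξ₀) = (k^2 - κ^2) / (|κ| * Real.sqrt (k^2 + κ^2))) :
    ‖f ξ₀‖ = Real.sqrt (k^2 + κ^2) / 2 := by
  have hs2 : (0:ℝ) < k^2 + κ^2 := by positivity
  have hκ' : (0:ℝ) < |κ| := abs_pos.mpr hκ
  set s : ℝ := Real.sqrt (k^2 + κ^2) with hs
  have hspos : 0 < s := Real.sqrt_pos.mpr hs2
  have hssq : s^2 = k^2 + κ^2 := Real.sq_sqrt hs2.le
  have hkκ : κ^2 < k^2 := by nlinarith [sq_nonneg κ]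
  -- cos lam
  have hwre : ((κ:ℂ) * ((κ:ℂ) + I * k)) = ((κ^2 : ℝ) : ℂ) + ((κ*k : ℝ):ℂ) * I := by
    push_cast; ring
  have hwabs : ‖(κ:ℂ) * ((κ:ℂ) + I * k)‖ = |κ| * s := by
    rw [hwre, Complex.norm_add_mul_I]
    rw [show (κ^2)^2 + (κ*k)^2 = κ^2 * (k^2 + κ^2) by ring]
    rw [Real.sqrt_mul (sq_nonneg κ), Real.sqrt_sq_eq_abs]
  have hwne : ((κ:ℂ) * ((κ:ℂ) + I * k)) ≠ 0 := by
    intro h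
    rw [h, norm_zero] at hwabs
    nlinarith
  have hcos : Real.cos lam = κ^2 / (|κ| * s) := by
    rw [hlam, Complex.cos_arg hwne, hwabs, hwre]
    simp [← Complex.ofReal_pow]
  -- |cosh z|
  have hcoshz : ‖Complex.cosh ((k:ℂ) * ξ₀ + I * ((lam:ℂ)/2))‖
      = Real.sqrt ((Real.cosh (k*ξ₀) * Real.cos (lam/2))^2
          + (Real.sinh (k*ξ₀) * Real.sin (lam/2))^2) := by
    have h1 : ((k:ℂ) * ξ₀ + I * ((lam:ℂ)/2)) = ((k*ξ₀ : ℝ):ℂ) + ((lam/2 : ℝ):ℂ) * I := by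
      push_cast; ring
    rw [h1, Complex.cosh_add, Complex.cosh_mul_I, Complex.sinh_mul_I]
    rw [show Complex.cosh ((k*ξ₀ : ℝ):ℂ) * Complex.cos ((lam/2 : ℝ):ℂ)
        + Complex.sinh ((k*ξ₀ : ℝ):ℂ) * (Complex.sin ((lam/2 : ℝ):ℂ) * I)
        = ((Real.cosh (k*ξ₀) * Real.cos (lam/2) : ℝ):ℂ)
          + ((Real.sinh (k*ξ₀) * Real.sin (lam/2) : ℝ):ℂ) * I by push_cast; ring]
    exact Complex.norm_add_mul_I _ _
  have key : (Real.cosh (k*ξ₀) * Real.cos (lam/2))^2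
      + (Real.sinh (k*ξ₀) * Real.sin (lam/2))^2 = k^2/(2 * |κ| * s) := by
    have hsh : Real.sinh (k*ξ₀)^2 = Real.cosh (k*ξ₀)^2 - 1 := by
      nlinarith [Real.cosh_sq_sub_sinh_sq (k*ξ₀)]
    have hch : Real.cosh (2*k*ξ₀) = 2 * Real.cosh (k*ξ₀)^2 - 1 := by
      rw [mul_assoc, Real.cosh_two_mul, hsh]; ring
    have hch2 : Real.cosh (k*ξ₀)^2 = ((k^2-κ^2)/(|κ| * s) + 1)/2 := by
      rw [hcrit] at hch; linarith
    have hc2 : Real.cos (lam/2)^2 = (1 + Real.cos lam)/2 := by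
      have h := Real.cos_sq (lam/2)
      rw [show 2*(lam/2) = lam by ring] at h
      linarith
    have hs2' : Real.sin (lam/2)^2 = 1 - Real.cos (lam/2)^2 := by
      nlinarith [Real.sin_sq_add_cos_sq (lam/2)]
    rw [mul_pow, mul_pow, hsh, hs2', hc2, hcos, hch2]
    field_simp
    ring
  -- denominator
  have hD : |κ| * Real.cosh (2*k*ξ₀) + s = 2*k^2/s := by
    rw [hcrit, show (2:ℝ)*k^2 = (k^2 - κ^2) + (k^2+κ^2) by ring, ← hssq]
    field_simp
  -- (k²+κ²)^(1/4) = √s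
  have hs4 : ((k^2+κ^2) ^ ((1:ℝ)/4)) = Real.sqrt s := by
    rw [hs, Real.sqrt_eq_rpow, Real.sqrt_eq_rpow, ← Real.rpow_mul hs2.le]
    norm_num
  have hA : Real.sqrt (k^2/(2 * |κ| * s)) = k / (Real.sqrt (2 * |κ|) * Real.sqrt s) := by
    rw [Real.sqrt_div (sq_nonneg k), Real.sqrt_sq hk.le,
      Real.sqrt_mul (by positivity : (0:ℝ) ≤ 2 * |κ|) s]
  have hexp : ‖Complex.exp (I * ((κ:ℂ) * ξ₀))‖ = 1 := by
    rw [Complex.norm_exp]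
    simp [Complex.mul_re]
  rw [hf ξ₀, norm_div, norm_mul, norm_mul, norm_mul, norm_mul, hexp, hcoshz, key, hA, hD, hs4,
    Complex.norm_real, Real.norm_eq_abs, Complex.norm_real, Real.norm_eq_abs,
    Complex.norm_real, Real.norm_eq_abs, Complex.norm_real, Real.norm_eq_abs]
  rw [_root_.abs_of_pos hk, _root_.abs_of_nonneg (Real.sqrt_nonneg _),
    _root_.abs_of_nonneg (Real.sqrt_nonneg _),
    _root_.abs_of_pos (show (0:ℝ) < 2*k^2/s by positivity)]
  have h1 : Real.sqrt (2 * |κ|) ≠ 0 := by positivity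
  have h2 : Real.sqrt s ≠ 0 := by positivity
  field_simp
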